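/- Let χ_{-4} be the primitive Dirichlet character modulo 4 (χ_{-4}(n) = 1 for n ≡ 1 mod 4, −1 for n ≡ 3 mod 4, 0 for even n) and let κ := 2k+1 ≥ 1 with k an integer ≥ 0, and d ≥ 1. Then for each ω ∈ {•,★}, L^ω_d({κ}^d; {χ_{-4}}^d) = i^{κd} · [ Σ_{μ ⊢ d} (ε^ω_μ / z_μ) · ( (-1)^{ℓ(μ)} i^{ℓ(μ_o)} ∏_{j : μ_j even} (2^{κμ_j} − 1) / 2^{ℓ(μ) + κ|μ_o|} ) · ∏_{j : μ_j odd} E_{κμ_j − 1}/(κμ_j − 1)! · ∏_{j : μ_j even} B_{κμ_j}/(κμ_j)! ] · π^{κd}, where μ_o denotes the multiset of odd parts of μ, |μ_o| their sum and ℓ(μ_o) their number. -/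

import Mathlib

open Complex Filter Finset Topology

noncomputable section

/-- Generalized Bernoulli numbers `B_{n,χ}`, defined via the generating function
`∑_{a=1}^{N} χ(a) t e^{at}/(e^{Nt}-1) = ∑_{n≥0} B_{n,χ} t^n/n!`.
Formally, `t e^{at}/(e^{Nt}-1) = e^{at} * g⁻¹` where `g = ∑_m N^{m+1} t^m/(m+1)!`. -/
def genBernoulli {N : ℕ} (χ : DirichletCharacter ℂ N) (n : ℕ) : ℂ :=
  (n.factorial : ℂ) *
    PowerSeries.coeff n
      (∑ a ∈ Finset.Icc 1 N, (χ a) •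
        (PowerSeries.rescale (a : ℂ) (PowerSeries.exp ℂ) *
          (PowerSeries.mk fun m => (N : ℂ) ^ (m + 1) / (m + 1).factorial)⁻¹))

/-- Euler numbers, defined by `2/(e^t + e^{-t}) = ∑ E_n t^n/n!`. -/
def eulerNumber (n : ℕ) : ℚ :=
  (n.factorial : ℚ) *
    PowerSeries.coeff n
      (2 * (PowerSeries.mk fun m => (1 + (-1 : ℚ) ^ m) / m.factorial)⁻¹)

/-- Gauss sum `τ(χ) = ∑_{a=1}^{N} χ(a) e^{2πia/N}`. -/
def gaussSum' {N : ℕ} (χ : DirichletCharacter ℂ N) : ℂ :=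
  ∑ a ∈ Finset.Icc 1 N, χ a * Complex.exp (2 * Real.pi * Complex.I * a / N)

/-- The parity `e(χ) ∈ {0,1}` of a Dirichlet character: `χ(-1) = (-1)^{e(χ)}`. -/
def charParity {N : ℕ} (χ : DirichletCharacter ℂ N) : ℕ :=
  if χ (-1) = 1 then 0 else 1

/-- `z_μ = ∏_i i^{m_i(μ)} m_i(μ)!` for a partition `μ`. -/
def zPart {d : ℕ} (μ : Nat.Partition d) : ℕ :=
  ∏ i ∈ μ.parts.toFinset, i ^ μ.parts.count i * (μ.parts.count i).factorial

/-- Truncated strict multiple `L`-sum `∑_{0<m_1<⋯<m_d≤M} ∏_j χ(m_j)/m_j^κ`. -/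
def multLSumLt {N : ℕ} (χ : DirichletCharacter ℂ N) (d κ M : ℕ) : ℂ :=
  ∑ m ∈ (Fintype.piFinset fun _ : Fin d => Finset.Icc 1 M).filter
      (fun m => ∀ i j : Fin d, i < j → m i < m j),
    ∏ j, χ (m j) / (m j : ℂ) ^ κ

/-- Truncated non-strict multiple `L`-sum `∑_{0<m_1≤⋯≤m_d≤M} ∏_j χ(m_j)/m_j^κ`. -/
def multLSumLe {N : ℕ} (χ : DirichletCharacter ℂ N) (d κ M : ℕ) : ℂ :=
  ∑ m ∈ (Fintype.piFinset fun _ : Fin d => Finset.Icc 1 M).filter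
      (fun m => ∀ i j : Fin d, i < j → m i ≤ m j),
    ∏ j, χ (m j) / (m j : ℂ) ^ κ

/-- The Euler-factor correction `α_χ(s) = ∏_{p | N, p ∤ N(χ')} (1 - χ'(p) p^{-s})`. -/
def alphaFactor {N : ℕ} (χ : DirichletCharacter ℂ N) (s : ℕ) : ℂ :=
  ∏ p ∈ N.primeFactors.filter (fun p => ¬ p ∣ χ.conductor),
    (1 - χ.primitiveCharacter p * (p : ℂ) ^ (-(s : ℤ)))

/-- The primitive Dirichlet character mod 4 (`χ_{-4}`), valued in `ℂ`. -/
def chiFour : DirichletCharacter ℂ 4 := ZMod.χ₄.ringHomComp (Int.castRingHom ℂ)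

/-- The partition sum of formula (2.9) (the character `χ_{-4}`). -/
def chiFourEvalSum (κ d : ℕ) (strict : Bool) : ℂ :=
  ∑ μ : Nat.Partition d,
    ((if strict then (-1 : ℂ) ^ ((d : ℤ) - μ.parts.card) else 1) / (zPart μ : ℂ)) *
    ((-1 : ℂ) ^ μ.parts.card *
        Complex.I ^ (μ.parts.filter fun p => p % 2 = 1).card *
        ((μ.parts.filter fun p => p % 2 = 0).map fun pj => ((2 : ℂ) ^ (κ * pj) - 1)).prod /
      2 ^ (μ.parts.card + κ * (μ.parts.filter fun p => p % 2 = 1).sum)) *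
    ((μ.parts.filter fun p => p % 2 = 1).map fun pj =>
      (eulerNumber (κ * pj - 1) : ℂ) / ((κ * pj - 1).factorial : ℂ)).prod *
    ((μ.parts.filter fun p => p % 2 = 0).map fun pj =>
      (bernoulli' (κ * pj) : ℂ) / ((κ * pj).factorial : ℂ)).prod

section MLVAux

namespace MLVEuler

open PowerSeries

def Cser : PowerSeries ℚ := PowerSeries.mk fun m => (1 + (-1 : ℚ) ^ m) / m.factorial

lemma eulerNumber_def (n : ℕ) :
    eulerNumber n = (n.factorial : ℚ) * PowerSeries.coeff n (2 * Cser⁻¹) := rfl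

lemma constC : PowerSeries.constantCoeff Cser = 2 := by
  have : PowerSeries.constantCoeff Cser = PowerSeries.coeff 0 Cser := by
    rw [PowerSeries.coeff_zero_eq_constantCoeff]
  rw [this, Cser, PowerSeries.coeff_mk]
  norm_num

lemma hC : PowerSeries.constantCoeff Cser ≠ 0 := by rw [constC]; norm_num

lemma coeff_two_mul (φ : PowerSeries ℚ) (n : ℕ) :
    PowerSeries.coeff n (2 * φ) = 2 * PowerSeries.coeff n φ := by
  have h2 : (2 : ℚ⟦X⟧) = PowerSeries.C 2 := by
    rw [map_ofNat]
  rw [h2, PowerSeries.coeff_C_mul]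

lemma eulerNumber_zero : eulerNumber 0 = 1 := by
  rw [eulerNumber_def, coeff_two_mul, PowerSeries.coeff_zero_eq_constantCoeff,
    PowerSeries.constantCoeff_inv, constC]
  norm_num

lemma Cser_eq : Cser = PowerSeries.exp ℚ + PowerSeries.rescale (-1 : ℚ) (PowerSeries.exp ℚ) := by
  ext n
  rw [Cser, PowerSeries.coeff_mk, map_add, PowerSeries.coeff_rescale, PowerSeries.coeff_exp]
  have : algebraMap ℚ ℚ (1 / n.factorial) = 1 / (n.factorial : ℚ) := rfl
  rw [this]
  field_simp

def Fser (t : ℚ) : PowerSeries ℚ :=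
  PowerSeries.mk fun n => Polynomial.aeval t ((1 / n.factorial : ℚ) • Polynomial.bernoulli n)

lemma Fser_bgf (t : ℚ) : Fser t * (PowerSeries.exp ℚ - 1)
    = PowerSeries.X * PowerSeries.rescale t (PowerSeries.exp ℚ) :=
  Polynomial.bernoulli_generating_function t

lemma exp_sub_one_ne : (PowerSeries.exp ℚ - 1) ≠ 0 := by
  intro h
  have := congrArg (PowerSeries.coeff 1) h
  rw [map_sub, PowerSeries.coeff_exp, PowerSeries.coeff_one] at this
  norm_num at this

lemma rescale_exp_mul (a b : ℚ) :
    PowerSeries.rescale a (PowerSeries.exp ℚ) * PowerSeries.rescale b (PowerSeries.exp ℚ)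
      = PowerSeries.rescale (a + b) (PowerSeries.exp ℚ) :=
  PowerSeries.exp_mul_exp_eq_exp_add a b

lemma rescale_zero_exp : PowerSeries.rescale (0 : ℚ) (PowerSeries.exp ℚ) = 1 := by
  rw [PowerSeries.rescale_zero]
  simp [PowerSeries.constantCoeff_exp]

lemma rescale_one_exp : PowerSeries.rescale (1 : ℚ) (PowerSeries.exp ℚ) = PowerSeries.exp ℚ := by
  rw [PowerSeries.rescale_one]
  rfl

lemma rescale_neg_one_X : PowerSeries.rescale (-1 : ℚ) PowerSeries.X = - PowerSeries.X := by
  ext n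
  rw [PowerSeries.coeff_rescale, map_neg]
  by_cases h : n = 1 <;> simp [PowerSeries.coeff_X, h]

lemma Fser_reflect : PowerSeries.rescale (-1 : ℚ) (Fser (1/4)) = Fser (3/4) := by
  have h1 := Fser_bgf (1/4)
  have h2 := Fser_bgf (3/4)
  apply mul_right_cancel₀ exp_sub_one_ne
  rw [h2]
  have h3 := congrArg (PowerSeries.rescale (-1 : ℚ)) h1
  rw [map_mul, map_sub, map_one, map_mul, rescale_neg_one_X,
    PowerSeries.rescale_rescale] at h3
  have h4 : (1/4 : ℚ) * (-1) = -(1/4) := by norm_num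
  rw [h4] at h3
  have h5 := congrArg (fun z => z * PowerSeries.exp ℚ) h3
  have e1 : (PowerSeries.rescale (-1:ℚ) (PowerSeries.exp ℚ) - 1) * PowerSeries.exp ℚ
      = 1 - PowerSeries.exp ℚ := by
    have m := rescale_exp_mul (-1) 1
    rw [rescale_one_exp, show (-1 + 1 : ℚ) = 0 by norm_num, rescale_zero_exp] at m
    rw [sub_mul, one_mul, m]
  have e2 : PowerSeries.rescale (-(1/4) : ℚ) (PowerSeries.exp ℚ) * PowerSeries.exp ℚ
      = PowerSeries.rescale (3/4 : ℚ) (PowerSeries.exp ℚ) := by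
    have m := rescale_exp_mul (-(1/4)) 1
    rw [rescale_one_exp, show (-(1/4) + 1 : ℚ) = 3/4 by norm_num] at m
    exact m
  rw [mul_assoc, e1, mul_assoc, e2] at h5
  -- h5 : r₋₁F¼ * (1 - exp) = -X * r¾exp
  linear_combination -h5

lemma Fser_main : Fser (1/4) - Fser (3/4)
    = -(PowerSeries.X * PowerSeries.rescale (1/4 : ℚ) Cser⁻¹) := by
  have h1 := Fser_bgf (1/4)
  have h2 := Fser_bgf (3/4)
  have hSne : PowerSeries.rescale (1/4 : ℚ) Cser ≠ 0 := by
    intro h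
    have := congrArg (PowerSeries.coeff 0) h
    rw [PowerSeries.coeff_rescale, PowerSeries.coeff_zero_eq_constantCoeff, constC] at this
    norm_num at this
  have hinv : PowerSeries.rescale (1/4 : ℚ) Cser⁻¹ * PowerSeries.rescale (1/4 : ℚ) Cser = 1 := by
    rw [← map_mul, PowerSeries.inv_mul_cancel Cser hC, map_one]
  have hsplit : PowerSeries.rescale (1/4 : ℚ) Cser
      = PowerSeries.rescale (1/4 : ℚ) (PowerSeries.exp ℚ)
        + PowerSeries.rescale (-(1/4) : ℚ) (PowerSeries.exp ℚ) := by
    rw [Cser_eq, map_add, PowerSeries.rescale_rescale]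
    norm_num
  apply mul_right_cancel₀ exp_sub_one_ne
  apply mul_right_cancel₀ hSne
  rw [hsplit] at hinv ⊢
  have m1 := rescale_exp_mul (1/4) (1/4)
  have m2 := rescale_exp_mul (1/4) (-(1/4))
  have m3 := rescale_exp_mul (3/4) (1/4)
  have m4 := rescale_exp_mul (3/4) (-(1/4))
  rw [show (1/4 : ℚ) + 1/4 = 1/2 by norm_num] at m1
  rw [show (1/4 : ℚ) + -(1/4) = 0 by norm_num, rescale_zero_exp] at m2
  rw [show (3/4 : ℚ) + 1/4 = 1 by norm_num, rescale_one_exp] at m3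
  rw [show (3/4 : ℚ) + -(1/4) = 1/2 by norm_num] at m4
  linear_combination
    (PowerSeries.rescale (1/4 : ℚ) (PowerSeries.exp ℚ)
      + PowerSeries.rescale (-(1/4) : ℚ) (PowerSeries.exp ℚ)) * h1
    - (PowerSeries.rescale (1/4 : ℚ) (PowerSeries.exp ℚ)
      + PowerSeries.rescale (-(1/4) : ℚ) (PowerSeries.exp ℚ)) * h2
    + PowerSeries.X * (PowerSeries.exp ℚ - 1) * hinv
    + PowerSeries.X * m1 + PowerSeries.X * m2 - PowerSeries.X * m3 - PowerSeries.X * m4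

lemma coeff_Fser (t : ℚ) (n : ℕ) :
    PowerSeries.coeff n (Fser t) = (1 / n.factorial : ℚ) * (Polynomial.bernoulli n).eval t := by
  rw [Fser, PowerSeries.coeff_mk, map_smul, smul_eq_mul]
  congr 1

end MLVEuler

namespace MLV

/-! ### combinatorial part -/

def Z (s : Multiset ℕ) : ℕ := ∏ i ∈ s.toFinset, i ^ s.count i * (s.count i).factorial

end MLV

/-- `B_n(1/4) = -n E_{n-1}/4^n` for odd `n`. -/
lemma bernoulli_poly_quarter {n : ℕ} (hn : n % 2 = 1) :
    (Polynomial.bernoulli n).eval (1/4 : ℚ) = -(n : ℚ) * eulerNumber (n-1) / 4 ^ n := by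
  obtain ⟨m, rfl⟩ : ∃ m, n = m + 1 := ⟨n - 1, by omega⟩
  have hmain := congrArg (PowerSeries.coeff (m+1)) MLVEuler.Fser_main
  rw [map_sub, map_neg, PowerSeries.coeff_succ_X_mul, PowerSeries.coeff_rescale] at hmain
  have hrefl := congrArg (PowerSeries.coeff (m+1)) MLVEuler.Fser_reflect
  rw [PowerSeries.coeff_rescale] at hrefl
  have hodd : ((-1 : ℚ)) ^ (m+1) = -1 := by
    have : (m+1) % 2 = 1 := hn
    rw [← Nat.div_add_mod (m+1) 2, this, pow_add, pow_mul]
    norm_num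
  rw [hodd] at hrefl
  rw [MLVEuler.coeff_Fser, MLVEuler.coeff_Fser] at hmain hrefl
  have hE : PowerSeries.coeff m (MLVEuler.Cser⁻¹) = eulerNumber m / (2 * m.factorial) := by
    rw [MLVEuler.eulerNumber_def, MLVEuler.coeff_two_mul]
    have hf0 : (m.factorial : ℚ) ≠ 0 := Nat.cast_ne_zero.2 (Nat.factorial_ne_zero m)
    field_simp
  rw [hE] at hmain
  have hmain2 : (2:ℚ) * ((1/((m+1).factorial : ℚ)) * (Polynomial.bernoulli (m+1)).eval (1/4 : ℚ))
      = -((1/4 : ℚ)^m * (eulerNumber m / (2 * m.factorial))) := by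
    linear_combination hmain - hrefl
  rw [Nat.add_sub_cancel]
  have hfac : ((m+1).factorial : ℚ) = (m+1) * m.factorial := by
    rw [Nat.factorial_succ]; push_cast; ring
  have hf0 : (m.factorial : ℚ) ≠ 0 := Nat.cast_ne_zero.2 (Nat.factorial_ne_zero m)
  rw [eq_div_iff (show (4:ℚ)^(m+1) ≠ 0 by positivity), pow_succ]
  push_cast
  apply mul_right_cancel₀ hf0
  have h4 : (1/4:ℚ)^m * 4^m = 1 := by rw [← mul_pow]; norm_num
  rw [hfac] at hmain2
  field_simp at hmain2
  linear_combination ((4:ℚ)^m * m.factorial) * hmain2 - ((m+1) * eulerNumber m * m.factorial) * h4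

namespace MLV

lemma Z_cons (i : ℕ) (t : Multiset ℕ) : Z (i ::ₘ t) = (i * (t.count i + 1)) * Z t := by
  classical
  unfold Z
  rw [Multiset.toFinset_cons]
  by_cases h : i ∈ t.toFinset
  · rw [Finset.insert_eq_self.2 h]
    rw [← Finset.mul_prod_erase _ _ h,
      ← Finset.mul_prod_erase _ (fun a => a ^ t.count a * (t.count a).factorial) h]
    have h1 : ∀ a ∈ t.toFinset.erase i,
        a ^ (i ::ₘ t).count a * ((i ::ₘ t).count a).factorial
          = a ^ t.count a * (t.count a).factorial := by
      intro a ha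
      rw [Multiset.count_cons_of_ne (Finset.ne_of_mem_erase ha)]
    rw [Finset.prod_congr rfl h1, Multiset.count_cons_self, pow_succ, Nat.factorial_succ]
    ring
  · have h0 : t.count i = 0 := Multiset.count_eq_zero.2 (fun hm => h (Multiset.mem_toFinset.2 hm))
    rw [Finset.prod_insert h, Multiset.count_cons_self, h0]
    have h1 : ∀ a ∈ t.toFinset,
        a ^ (i ::ₘ t).count a * ((i ::ₘ t).count a).factorial
          = a ^ t.count a * (t.count a).factorial := by
      intro a ha
      rw [Multiset.count_cons_of_ne (by rintro rfl; exact h ha)]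
    rw [Finset.prod_congr rfl h1]
    simp [Nat.factorial]

lemma Z_zero : Z 0 = 1 := by simp [Z]

lemma Z_pos {s : Multiset ℕ} (h : ∀ a ∈ s, 0 < a) : 0 < Z s := by
  apply Finset.prod_pos
  intro a ha
  exact Nat.mul_pos (Nat.pow_pos (h a (Multiset.mem_toFinset.1 ha)))
    (Nat.factorial_pos _)

noncomputable def w (q : ℕ → ℂ) (s : Multiset ℕ) : ℂ := (s.map q).prod / (Z s : ℂ)

def Pfin (e : ℕ) : Finset (Multiset ℕ) :=
  (Finset.univ : Finset (Nat.Partition e)).image Nat.Partition.parts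

lemma mem_Pfin {e : ℕ} {s : Multiset ℕ} : s ∈ Pfin e ↔ s.sum = e ∧ ∀ a ∈ s, 0 < a := by
  constructor
  · intro hs
    obtain ⟨μ, _, rfl⟩ := Finset.mem_image.1 hs
    exact ⟨μ.parts_sum, fun a ha => μ.parts_pos ha⟩
  · rintro ⟨h1, h2⟩
    exact Finset.mem_image.2 ⟨⟨s, fun {i} hi => h2 i hi, h1⟩, Finset.mem_univ _, rfl⟩

noncomputable def PS (q : ℕ → ℂ) (d : ℕ) : ℂ := ∑ s ∈ Pfin d, w q s

lemma Pfin_zero : Pfin 0 = {0} := by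
  ext s
  rw [mem_Pfin, Finset.mem_singleton]
  constructor
  · rintro ⟨h1, h2⟩
    ext a
    simp only [Multiset.count_zero]
    by_contra hc
    have ha : a ∈ s := Multiset.count_pos.1 (by omega)
    have := Multiset.le_sum_of_mem ha
    have := h2 a ha
    omega
  · rintro rfl; simp

lemma PS_zero (q : ℕ → ℂ) : PS q 0 = 1 := by
  rw [PS, Pfin_zero, Finset.sum_singleton, w, Z_zero]
  simp

lemma PS_rec (q : ℕ → ℂ) {d : ℕ} (hd : 0 < d) :
    (d : ℂ) * PS q d = ∑ i ∈ Finset.Icc 1 d, q i * PS q (d - i) := by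
  classical
  rw [PS, Finset.mul_sum]
  have hL : ∀ s ∈ Pfin d, (d : ℂ) * w q s
      = ∑ i ∈ s.toFinset, ((i * s.count i : ℕ) : ℂ) * w q s := by
    intro s hs
    rw [← Finset.sum_mul]
    congr 1
    have hsum : s.sum = d := (mem_Pfin.1 hs).1
    rw [← hsum, ← Nat.cast_sum]
    norm_cast
    have := Finset.sum_multiset_map_count s (id : ℕ → ℕ)
    rw [Multiset.map_id] at this
    rw [this]
    apply Finset.sum_congr rfl
    intro a _
    simp [mul_comm, id]
  rw [Finset.sum_congr rfl hL]
  have hR : ∀ i ∈ Finset.Icc 1 d, q i * PS q (d - i)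
      = ∑ t ∈ Pfin (d - i), q i * w q t := by
    intro i _
    rw [PS, Finset.mul_sum]
  rw [Finset.sum_congr rfl hR]
  rw [Finset.sum_sigma', Finset.sum_sigma']
  refine Finset.sum_nbij' (i := fun p => (⟨p.2, p.1.erase p.2⟩ : (_ : ℕ) × Multiset ℕ))
    (j := fun p => (⟨p.1 ::ₘ p.2, p.1⟩ : (_ : Multiset ℕ) × ℕ)) ?_ ?_ ?_ ?_ ?_
  · rintro ⟨s, i⟩ hp
    simp only [Finset.mem_sigma] at hp ⊢
    obtain ⟨hs, hi⟩ := hp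
    obtain ⟨hsum, hpos⟩ := mem_Pfin.1 hs
    have him : i ∈ s := Multiset.mem_toFinset.1 hi
    have hile : i ≤ d := hsum ▸ Multiset.le_sum_of_mem him
    have hipos : 0 < i := hpos i him
    constructor
    · exact Finset.mem_Icc.2 ⟨hipos, hile⟩
    · rw [mem_Pfin]
      constructor
      · have := Multiset.cons_erase him
        have h2 : (i ::ₘ s.erase i).sum = s.sum := by rw [this]
        rw [Multiset.sum_cons] at h2
        omega
      · exact fun a ha => hpos a (Multiset.mem_of_mem_erase ha)
  · rintro ⟨i, t⟩ hp
    simp only [Finset.mem_sigma] at hp ⊢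
    obtain ⟨hi, ht⟩ := hp
    obtain ⟨hsum, hpos⟩ := mem_Pfin.1 ht
    obtain ⟨h1, h2⟩ := Finset.mem_Icc.1 hi
    constructor
    · rw [mem_Pfin]
      refine ⟨by rw [Multiset.sum_cons, hsum]; omega, ?_⟩
      intro a ha
      rcases Multiset.mem_cons.1 ha with rfl | ha'
      · omega
      · exact hpos a ha'
    · exact Multiset.mem_toFinset.2 (Multiset.mem_cons_self _ _)
  · rintro ⟨s, i⟩ hp
    simp only [Finset.mem_sigma] at hp
    have him : i ∈ s := Multiset.mem_toFinset.1 hp.2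
    simp only [Multiset.cons_erase him]
  · rintro ⟨i, t⟩ _
    simp only [Multiset.erase_cons_head]
  · rintro ⟨s, i⟩ hp
    simp only [Finset.mem_sigma] at hp
    obtain ⟨hs, hi⟩ := hp
    obtain ⟨hsum, hpos⟩ := mem_Pfin.1 hs
    have him : i ∈ s := Multiset.mem_toFinset.1 hi
    set t := s.erase i with hts
    have hst : s = i ::ₘ t := (Multiset.cons_erase him).symm
    have hcount : s.count i = t.count i + 1 := by
      rw [hst, Multiset.count_cons_self]
    have htpos : ∀ a ∈ t, 0 < a := fun a ha => hpos a (Multiset.mem_of_mem_erase ha)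
    have hZt : (Z t : ℂ) ≠ 0 := Nat.cast_ne_zero.2 (Z_pos htpos).ne'
    have hipos : 0 < i := hpos i him
    simp only []
    rw [hcount, w, w, hst, Z_cons, Multiset.map_cons, Multiset.prod_cons]
    push_cast
    have h4 : ((i : ℂ) * ((t.count i : ℂ) + 1)) ≠ 0 :=
      mul_ne_zero (Nat.cast_ne_zero.2 hipos.ne') (Nat.cast_add_one_ne_zero _)
    have hi0 : (i : ℂ) ≠ 0 := Nat.cast_ne_zero.2 hipos.ne'
    field_simp

lemma PS_unique (q : ℕ → ℂ) (F : ℕ → ℂ) (h0 : F 0 = 1)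
    (hrec : ∀ d : ℕ, 0 < d → (d : ℂ) * F d = ∑ i ∈ Finset.Icc 1 d, q i * F (d - i)) :
    ∀ d, F d = PS q d := by
  intro d
  induction d using Nat.strong_induction_on with
  | _ d ih =>
    rcases Nat.eq_zero_or_pos d with rfl | h
    · rw [h0, PS_zero]
    · have h1 := hrec d h
      have h2 := PS_rec q h
      have h3 : ∀ i ∈ Finset.Icc 1 d, q i * F (d - i) = q i * PS q (d - i) := by
        intro i hi
        obtain ⟨hi1, _⟩ := Finset.mem_Icc.1 hi
        rw [ih (d - i) (by omega)]
      rw [Finset.sum_congr rfl h3, ← h2] at h1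
      exact mul_left_cancel₀ (Nat.cast_ne_zero.2 h.ne') h1

/-! ### symmetric function sums -/

variable (x : ℕ → ℂ)

noncomputable def Es (M n : ℕ) : ℂ := ∑ t ∈ Finset.powersetCard n (Finset.Icc 1 M), ∏ a ∈ t, x a

noncomputable def Hs (M n : ℕ) : ℂ :=
  ∑ m ∈ ((Finset.Icc 1 M).sym n).map ⟨Sym.toMultiset, Sym.coe_injective⟩, (m.map x).prod

noncomputable def ps (M i : ℕ) : ℂ := ∑ m ∈ Finset.Icc 1 M, x m ^ i

lemma Es_zero (M : ℕ) : Es x M 0 = 1 := by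
  simp [Es]

lemma mem_msets {M n : ℕ} {m : Multiset ℕ} :
    m ∈ ((Finset.Icc 1 M).sym n).map ⟨Sym.toMultiset, Sym.coe_injective⟩ ↔
      Multiset.card m = n ∧ ∀ a ∈ m, a ∈ Finset.Icc 1 M := by
  simp only [Finset.mem_map, Finset.mem_sym_iff, Function.Embedding.coeFn_mk]
  constructor
  · rintro ⟨y, hy, rfl⟩
    exact ⟨y.2, fun a ha => hy a ha⟩
  · rintro ⟨hc, hm⟩
    exact ⟨⟨m, hc⟩, fun a ha => hm a ha, rfl⟩

lemma Hs_zero (M : ℕ) : Hs x M 0 = 1 := by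
  have h : ((Finset.Icc 1 M).sym 0).map ⟨Sym.toMultiset, Sym.coe_injective⟩ = {(0 : Multiset ℕ)} := by
    ext m
    rw [mem_msets, Finset.mem_singleton]
    constructor
    · rintro ⟨hc, _⟩
      exact Multiset.card_eq_zero.1 hc
    · rintro rfl
      simp
  rw [Hs, h, Finset.sum_singleton]
  simp

lemma neg_pow_aux {i d : ℕ} (h : i ≤ d) : (-1:ℂ)^(d+1) * (-1:ℂ)^(d-i) = (-1:ℂ)^(i+1) := by
  rw [← pow_add]
  have he : d + 1 + (d - i) = 2*(d-i) + (i+1) := by omega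
  rw [he, pow_add, pow_mul, neg_one_sq, one_pow, one_mul]

lemma Es_rec (M : ℕ) {d : ℕ} (hd : 0 < d) :
    (d : ℂ) * Es x M d =
      ∑ i ∈ Finset.Icc 1 d, ((-1 : ℂ) ^ (i+1) * ps x M i) * Es x M (d - i) := by
  classical
  have base := MvPolynomial.mul_esymm_eq_sum ↥(Finset.Icc 1 M) ℂ d
  have tf := congrArg (MvPolynomial.aeval (fun y : ↥(Finset.Icc 1 M) => x y.1)) base
  have hesymm : ∀ n : ℕ,
      MvPolynomial.aeval (fun y : ↥(Finset.Icc 1 M) => x y.1)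
        (MvPolynomial.esymm ↥(Finset.Icc 1 M) ℂ n) = Es x M n := by
    intro n
    rw [MvPolynomial.aeval_esymm_eq_multiset_esymm]
    have hval : Multiset.map (fun y : ↥(Finset.Icc 1 M) => x y.1)
        (Finset.univ.val) = Multiset.map x (Finset.Icc 1 M).val := by
      rw [Finset.univ_eq_attach, Finset.attach_val]
      calc Multiset.map (fun y : ↥(Finset.Icc 1 M) => x y.1) (Finset.Icc 1 M).val.attach
          = Multiset.map x (Multiset.map Subtype.val (Finset.Icc 1 M).val.attach) := by
            rw [Multiset.map_map]; rfl
        _ = Multiset.map x (Finset.Icc 1 M).val := by rw [Multiset.attach_map_val]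
    rw [hval, Finset.esymm_map_val]
    rfl
  have hpsum : ∀ n : ℕ,
      MvPolynomial.aeval (fun y : ↥(Finset.Icc 1 M) => x y.1)
        (MvPolynomial.psum ↥(Finset.Icc 1 M) ℂ n) = ps x M n := by
    intro n
    rw [MvPolynomial.psum, map_sum]
    simp only [map_pow, MvPolynomial.aeval_X]
    rw [ps, Finset.univ_eq_attach, Finset.sum_attach (Finset.Icc 1 M) (fun m => x m ^ n)]
  simp only [map_mul, map_natCast, map_sum, map_pow, map_neg, map_one] at tf
  rw [hesymm] at tf
  simp only [hesymm, hpsum] at tf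
  rw [tf]
  rw [Finset.mul_sum]
  refine Finset.sum_nbij' (i := fun p => p.2) (j := fun i => (d - i, i)) ?_ ?_ ?_ ?_ ?_
  · rintro ⟨a, b⟩ hab
    rw [Finset.mem_filter, Finset.HasAntidiagonal.mem_antidiagonal] at hab
    obtain ⟨h1, h2⟩ := hab
    simp only [] at h1 h2 ⊢
    exact Finset.mem_Icc.2 ⟨by omega, by omega⟩
  · intro i hi
    rw [Finset.mem_Icc] at hi
    rw [Finset.mem_filter, Finset.HasAntidiagonal.mem_antidiagonal]
    constructor
    · simp only []; omega
    · simp only []; omega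
  · rintro ⟨a, b⟩ hab
    rw [Finset.mem_filter, Finset.HasAntidiagonal.mem_antidiagonal] at hab
    obtain ⟨h1, h2⟩ := hab
    simp only [] at h1 h2 ⊢
    have h3 : d - b = a := by omega
    rw [h3]
  · intro i hi
    rfl
  · rintro ⟨a, b⟩ hab
    rw [Finset.mem_filter, Finset.HasAntidiagonal.mem_antidiagonal] at hab
    obtain ⟨h1, h2⟩ := hab
    simp only [] at h1 h2 ⊢
    have ha : a = d - b := by omega
    have hble : b ≤ d := by omega
    subst ha
    rw [← mul_assoc, ← mul_assoc, neg_pow_aux hble]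
    ring

lemma Hs_rec (M : ℕ) {d : ℕ} (hd : 0 < d) :
    (d : ℂ) * Hs x M d = ∑ i ∈ Finset.Icc 1 d, ps x M i * Hs x M (d - i) := by
  classical
  rw [Hs, Finset.mul_sum]
  have hL : ∀ m ∈ ((Finset.Icc 1 M).sym d).map ⟨Sym.toMultiset, Sym.coe_injective⟩,
      (d : ℂ) * (m.map x).prod = ∑ a ∈ Finset.Icc 1 M, (m.count a : ℂ) * (m.map x).prod := by
    intro m hm
    obtain ⟨hc, hmem⟩ := mem_msets.1 hm
    rw [← Finset.sum_mul]
    congr 1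
    have h1 : ∑ a ∈ m.toFinset, (m.count a : ℂ) = (d : ℂ) := by
      rw [← Nat.cast_sum, Multiset.toFinset_sum_count_eq, hc]
    have h2 : ∑ a ∈ Finset.Icc 1 M, (m.count a : ℂ) = ∑ a ∈ m.toFinset, (m.count a : ℂ) := by
      symm
      apply Finset.sum_subset
      · intro b hb
        exact hmem b (Multiset.mem_toFinset.1 hb)
      · intro b _ hb
        rw [Multiset.count_eq_zero.2 (fun hc' => hb (Multiset.mem_toFinset.2 hc'))]
        simp
    rw [h2, h1]
  rw [Finset.sum_congr rfl hL, Finset.sum_comm]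
  have hR : ∀ i ∈ Finset.Icc 1 d, ps x M i * Hs x M (d - i)
      = ∑ a ∈ Finset.Icc 1 M, ∑ m ∈ ((Finset.Icc 1 M).sym (d-i)).map ⟨Sym.toMultiset, Sym.coe_injective⟩,
          x a ^ i * (m.map x).prod := by
    intro i _
    rw [ps, Hs, Finset.sum_mul]
    apply Finset.sum_congr rfl
    intro a _
    rw [Finset.mul_sum]
  rw [Finset.sum_congr rfl hR]
  conv_rhs => rw [Finset.sum_comm]
  apply Finset.sum_congr rfl
  intro a ha
  -- fixed a : count-splitting bijection
  have hsplit : ∀ m ∈ ((Finset.Icc 1 M).sym d).map ⟨Sym.toMultiset, Sym.coe_injective⟩,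
      (m.count a : ℂ) * (m.map x).prod = ∑ _i ∈ Finset.Icc 1 (m.count a), (m.map x).prod := by
    intro m _
    rw [Finset.sum_const, Nat.card_Icc]
    simp [nsmul_eq_mul]
  rw [Finset.sum_congr rfl hsplit]
  rw [Finset.sum_sigma', Finset.sum_sigma']
  refine Finset.sum_nbij' (i := fun p => (⟨p.2, p.1 - Multiset.replicate p.2 a⟩ : (_ : ℕ) × Multiset ℕ))
    (j := fun p => (⟨p.2 + Multiset.replicate p.1 a, p.1⟩ : (_ : Multiset ℕ) × ℕ)) ?_ ?_ ?_ ?_ ?_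
  · rintro ⟨m, i⟩ hp
    simp only [Finset.mem_sigma] at hp ⊢
    obtain ⟨hm, hi⟩ := hp
    obtain ⟨hc, hmem⟩ := mem_msets.1 hm
    rw [Finset.mem_Icc] at hi
    have hrep : Multiset.replicate i a ≤ m := Multiset.le_count_iff_replicate_le.1 hi.2
    have hcount : m.count a ≤ Multiset.card m := Multiset.count_le_card a m
    constructor
    · exact Finset.mem_Icc.2 ⟨hi.1, by omega⟩
    · rw [mem_msets]
      constructor
      · rw [Multiset.card_sub hrep, Multiset.card_replicate, hc]
      · intro b hb
        exact hmem b (Multiset.mem_of_le (Multiset.sub_le_self _ _) hb)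
  · rintro ⟨i, m'⟩ hp
    simp only [Finset.mem_sigma] at hp ⊢
    obtain ⟨hi, hm'⟩ := hp
    obtain ⟨hc, hmem⟩ := mem_msets.1 hm'
    rw [Finset.mem_Icc] at hi
    constructor
    · rw [mem_msets]
      constructor
      · rw [Multiset.card_add, Multiset.card_replicate, hc]
        omega
      · intro b hb
        rcases Multiset.mem_add.1 hb with h | h
        · exact hmem b h
        · rw [Multiset.eq_of_mem_replicate h]
          exact ha
    · rw [Finset.mem_Icc]
      constructor
      · exact hi.1
      · rw [Multiset.count_add, Multiset.count_replicate_self]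
        omega
  · rintro ⟨m, i⟩ hp
    simp only [Finset.mem_sigma] at hp
    obtain ⟨_, hi⟩ := hp
    rw [Finset.mem_Icc] at hi
    have hrep : Multiset.replicate i a ≤ m := Multiset.le_count_iff_replicate_le.1 hi.2
    simp only [tsub_add_cancel_of_le hrep]
  · rintro ⟨i, m'⟩ _
    simp only [add_tsub_cancel_right]
  · rintro ⟨m, i⟩ hp
    simp only [Finset.mem_sigma] at hp
    obtain ⟨_, hi⟩ := hp
    rw [Finset.mem_Icc] at hi
    have hrep : Multiset.replicate i a ≤ m := Multiset.le_count_iff_replicate_le.1 hi.2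
    simp only []
    conv_lhs => rw [← tsub_add_cancel_of_le hrep]
    rw [Multiset.map_add, Multiset.prod_add, Multiset.map_replicate, Multiset.prod_replicate]
    ring

lemma Es_eq_PS (M d : ℕ) : Es x M d = PS (fun i => (-1 : ℂ) ^ (i+1) * ps x M i) d :=
  PS_unique _ (Es x M) (Es_zero x M) (fun _ h => Es_rec x M h) d

lemma Hs_eq_PS (M d : ℕ) : Hs x M d = PS (fun i => ps x M i) d :=
  PS_unique _ (Hs x M) (Hs_zero x M) (fun _ h => Hs_rec x M h) d

/-! ### tuples to sets/multisets -/

lemma multLSumLt_eq (d κ M : ℕ) :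
    multLSumLt chiFour d κ M = Es (fun m => chiFour m / (m : ℂ) ^ κ) M d := by
  classical
  rw [multLSumLt, Es]
  refine Finset.sum_bij (i := fun t _ => Finset.image t Finset.univ) ?_ ?_ ?_ ?_
  · intro t ht
    rw [Finset.mem_filter] at ht
    have hmono : StrictMono t := fun i j h => ht.2 i j h
    rw [Finset.mem_powersetCard]
    constructor
    · intro a ha
      obtain ⟨j, _, rfl⟩ := Finset.mem_image.1 ha
      exact (Fintype.mem_piFinset.1 ht.1) j
    · rw [Finset.card_image_of_injective _ hmono.injective, Finset.card_univ, Fintype.card_fin]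
  · intro t₁ ht₁ t₂ ht₂ heq
    rw [Finset.mem_filter] at ht₁ ht₂
    have hm₁ : StrictMono t₁ := fun i j h => ht₁.2 i j h
    have hm₂ : StrictMono t₂ := fun i j h => ht₂.2 i j h
    have hc₁ : (Finset.image t₁ Finset.univ).card = d := by
      rw [Finset.card_image_of_injective _ hm₁.injective, Finset.card_univ, Fintype.card_fin]
    have e₁ := Finset.orderEmbOfFin_unique hc₁
      (f := t₁) (fun j => Finset.mem_image_of_mem _ (Finset.mem_univ j)) hm₁
    have him : Finset.image t₁ Finset.univ = Finset.image t₂ Finset.univ := heq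
    have e₂ := Finset.orderEmbOfFin_unique hc₁
      (f := t₂) (fun j => by rw [him]; exact Finset.mem_image_of_mem _ (Finset.mem_univ j)) hm₂
    rw [e₁, e₂]
  · intro A hA
    rw [Finset.mem_powersetCard] at hA
    obtain ⟨hsub, hcard⟩ := hA
    refine ⟨⇑(A.orderEmbOfFin hcard), ?_, ?_⟩
    · rw [Finset.mem_filter]
      constructor
      · rw [Fintype.mem_piFinset]
        intro j
        exact hsub (Finset.orderEmbOfFin_mem A hcard j)
      · intro i j hij
        exact (A.orderEmbOfFin hcard).strictMono hij
    · apply Finset.coe_injective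
      rw [Finset.coe_image, Finset.coe_univ, Set.image_univ, Finset.range_orderEmbOfFin]
  · intro t ht
    rw [Finset.mem_filter] at ht
    have hmono : StrictMono t := fun i j h => ht.2 i j h
    rw [Finset.prod_image (fun i _ j _ h => hmono.injective h)]

lemma univ_val_fin (d : ℕ) :
    (Finset.univ : Finset (Fin d)).val = ((List.finRange d : List (Fin d)) : Multiset (Fin d)) := by
  rfl

lemma mono_list_sorted {d : ℕ} {t : Fin d → ℕ} (h : ∀ i j : Fin d, i < j → t i ≤ t j) :
    ((List.finRange d).map t).Pairwise (· ≤ ·) := by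
  rw [List.pairwise_map]
  exact (List.pairwise_lt_finRange d).imp (fun {i j} hij => h i j hij)

lemma multLSumLe_eq (d κ M : ℕ) :
    multLSumLe chiFour d κ M = Hs (fun m => chiFour m / (m : ℂ) ^ κ) M d := by
  classical
  rw [multLSumLe, Hs]
  refine Finset.sum_bij (i := fun t _ => Multiset.map t Finset.univ.val) ?_ ?_ ?_ ?_
  · intro t ht
    rw [Finset.mem_filter] at ht
    rw [mem_msets]
    constructor
    · rw [Multiset.card_map]
      exact Finset.card_univ.trans (Fintype.card_fin d)
    · intro b hb
      obtain ⟨j, _, rfl⟩ := Multiset.mem_map.1 hb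
      exact (Fintype.mem_piFinset.1 ht.1) j
  · intro t₁ ht₁ t₂ ht₂ heq
    rw [Finset.mem_filter] at ht₁ ht₂
    have hs₁ := mono_list_sorted (fun i j h => ht₁.2 i j h)
    have hs₂ := mono_list_sorted (fun i j h => ht₂.2 i j h)
    simp only [univ_val_fin, Multiset.map_coe, Multiset.coe_eq_coe] at heq
    have hl := List.Perm.eq_of_pairwise' hs₁ hs₂ heq
    funext j
    exact List.map_inj_left.1 hl j (List.mem_finRange j)
  · intro m hm
    obtain ⟨hc, hmem⟩ := mem_msets.1 hm
    set l := Multiset.sort m with hldef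
    have hl : (l : Multiset ℕ) = m := Multiset.sort_eq m (· ≤ ·)
    have hlen : l.length = d := by
      rw [← hc, ← hl]
      rfl
    have hsort : l.Pairwise (· ≤ ·) := Multiset.pairwise_sort m (· ≤ ·)
    refine ⟨fun j => l.get (Fin.cast hlen.symm j), ?_, ?_⟩
    · rw [Finset.mem_filter]
      constructor
      · rw [Fintype.mem_piFinset]
        intro j
        apply hmem
        rw [← hl]
        apply Multiset.mem_coe.2
        rw [List.get_eq_getElem]
        exact List.getElem_mem _
      · intro i j hij
        refine hsort.rel_get_of_lt ?_
        rw [Fin.lt_def, Fin.coe_cast, Fin.coe_cast]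
        exact hij
    · show Multiset.map _ (Finset.univ : Finset (Fin d)).val = m
      rw [univ_val_fin, Multiset.map_coe, ← hl]
      congr 1
      apply List.ext_getElem
      · simp [hlen]
      · intro i h1 h2
        simp only [List.getElem_map, List.getElem_finRange, List.get_eq_getElem, Fin.coe_cast,
          Fin.cast_mk]
  · intro t ht
    rw [Finset.prod_eq_multiset_prod, Multiset.map_map]
    rfl

/-! ### analytic part -/

noncomputable def qlim (κ : ℕ) (i : ℕ) : ℂ :=
  if i % 2 = 1 then
    Complex.I ^ (κ * i) * (-Complex.I) * ((eulerNumber (κ * i - 1) : ℂ) / ((κ * i - 1).factorial))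
      * (Real.pi : ℂ) ^ (κ * i) / 2 ^ (κ * i + 1)
  else
    Complex.I ^ (κ * i) * (-1) * ((2 : ℂ) ^ (κ * i) - 1) *
      ((bernoulli' (κ * i) : ℂ) / ((κ * i).factorial)) * (Real.pi : ℂ) ^ (κ * i) / 2

/-- real-valued χ₄ -/
noncomputable def rfun (m : ℕ) : ℝ := if m % 2 = 0 then 0 else if m % 4 = 1 then 1 else -1

lemma chiFour_nat (m : ℕ) : chiFour (m : ZMod 4) = ((rfun m : ℝ) : ℂ) := by
  rw [chiFour, MulChar.ringHomComp_apply, ZMod.χ₄_nat_eq_if_mod_four, rfun]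
  split_ifs <;> simp

lemma rfun_eq_sin (m : ℕ) : rfun m = Real.sin (2 * Real.pi * m * (1/4)) := by
  obtain ⟨q, r, hr, hm⟩ : ∃ q r, r < 4 ∧ m = 4 * q + r := ⟨m / 4, m % 4, Nat.mod_lt _ (by norm_num), (Nat.div_add_mod m 4).symm⟩
  have key : 2 * Real.pi * m * (1/4) = Real.pi * r / 2 + (q : ℤ) * (2 * Real.pi) := by
    subst hm; push_cast; ring
  rw [key, Real.sin_add_int_mul_two_pi]
  subst hm
  have hmod2 : (4 * q + r) % 2 = r % 2 := by omega
  have hmod4 : (4 * q + r) % 4 = r := by omega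
  rw [rfun, hmod2, hmod4]
  interval_cases r
  · norm_num
  · norm_num [Real.sin_pi_div_two]
  · norm_num [show Real.pi * 2 / 2 = Real.pi by ring, Real.sin_pi]
  · norm_num [show Real.pi * 3 / 2 = Real.pi + Real.pi / 2 by ring, Real.sin_add,
      Real.sin_pi, Real.cos_pi, Real.sin_pi_div_two]

lemma rfun_zero : rfun 0 = 0 := by simp [rfun]

lemma rfun_odd_pow {i : ℕ} (hi : i % 2 = 1) (m : ℕ) : rfun m ^ i = rfun m := by
  have hodd : Odd i := Nat.odd_iff.2 hi
  rw [rfun]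
  split_ifs
  · rw [zero_pow (by omega)]
  · rw [one_pow]
  · rw [hodd.neg_one_pow]

lemma rfun_even_pow {i : ℕ} (hi : i % 2 = 0) (hi0 : i ≠ 0) (m : ℕ) :
    rfun m ^ i = if m % 2 = 1 then 1 else 0 := by
  have heven : Even i := Nat.even_iff.2 hi
  by_cases h2 : m % 2 = 0
  · rw [rfun, if_pos h2, zero_pow hi0, if_neg (show ¬ m % 2 = 1 by omega)]
  · rw [if_pos (show m % 2 = 1 by omega), rfun, if_neg h2]
    by_cases h4 : m % 4 = 1
    · rw [if_pos h4, one_pow]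
    · rw [if_neg h4, heven.neg_one_pow]

lemma rfun_leibniz (t : ℕ) : rfun (2 * t + 1) = (-1 : ℝ) ^ t := by
  rcases Nat.even_or_odd t with h | h
  · obtain ⟨u, rfl⟩ := h
    rw [rfun, if_neg (by omega), if_pos (by omega), Even.neg_one_pow ⟨u, rfl⟩]
  · obtain ⟨u, rfl⟩ := h
    rw [rfun, if_neg (by omega), if_neg (by omega), Odd.neg_one_pow ⟨u, rfl⟩]

lemma tendsto_Icc_of_hasSum {f : ℕ → ℝ} {L : ℝ} (hf : HasSum f L) (h0 : f 0 = 0) :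
    Filter.Tendsto (fun M => ∑ m ∈ Finset.Icc 1 M, f m) Filter.atTop (nhds L) := by
  have h1 := hf.tendsto_sum_nat
  have h2 : (fun M => ∑ m ∈ Finset.Icc 1 M, f m)
      = (fun n => ∑ m ∈ Finset.range n, f m) ∘ (fun M => M + 1) := by
    funext M
    have h3 : Finset.range (M+1) = insert 0 (Finset.Icc 1 M) := by
      ext a
      simp only [Finset.mem_range, Finset.mem_insert, Finset.mem_Icc]
      omega
    have h4 : (0:ℕ) ∉ Finset.Icc 1 M := by
      rw [Finset.mem_Icc]
      omega
    rw [Function.comp_apply, h3, Finset.sum_insert h4, h0, zero_add]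
  rw [h2]
  exact h1.comp (Filter.tendsto_add_atTop_nat 1)

lemma eval_bernoulli_real (n : ℕ) :
    (Polynomial.map (algebraMap ℚ ℝ) (Polynomial.bernoulli n)).eval (1/4 : ℝ)
      = (((Polynomial.bernoulli n).eval (1/4 : ℚ) : ℚ) : ℝ) := by
  have h14 : (1/4 : ℝ) = algebraMap ℚ ℝ (1/4 : ℚ) := by norm_num
  rw [h14, Polynomial.eval_map, Polynomial.eval₂_at_apply]
  rfl

lemma hasSum_chi_odd {n : ℕ} (hn : n ≠ 0) :
    HasSum (fun m : ℕ => rfun m / (m : ℝ) ^ (2 * n + 1))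
      ((-1 : ℝ) ^ n * (eulerNumber (2 * n) : ℝ) * Real.pi ^ (2 * n + 1)
        / (2 ^ (2 * n + 2) * (2 * n).factorial)) := by
  have h := hasSum_one_div_nat_pow_mul_sin hn (x := (1/4 : ℝ)) ⟨by norm_num, by norm_num⟩
  have hfun : (fun m : ℕ => 1 / (m : ℝ) ^ (2 * n + 1) * Real.sin (2 * Real.pi * m * (1/4)))
      = fun m : ℕ => rfun m / (m : ℝ) ^ (2 * n + 1) := by
    funext m
    rw [← rfun_eq_sin]
    ring
  rw [hfun] at h
  convert h using 1
  rw [eval_bernoulli_real, bernoulli_poly_quarter (by omega)]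
  have hfac : ((2*n+1).factorial : ℝ) = (2*n+1) * (2*n).factorial := by
    rw [Nat.factorial_succ]; push_cast; ring
  rw [Nat.add_sub_cancel]
  push_cast [hfac]
  have h1 : ((2:ℝ)*Real.pi)^(2*n+1) = 2^(2*n+1) * Real.pi^(2*n+1) := by rw [mul_pow]
  have h2 : (4:ℝ)^(2*n+1) = 2^(2*n+1) * 2^(2*n+1) := by
    rw [show (4:ℝ) = 2*2 by norm_num, mul_pow]
  have h3 : ((2:ℝ)*n+1) ≠ 0 := by positivity
  have h4 : ((2*n).factorial : ℝ) ≠ 0 := Nat.cast_ne_zero.2 (Nat.factorial_ne_zero _)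
  have h5 : (2:ℝ)^(2*n+1) ≠ 0 := by positivity
  rw [h1, h2]
  field_simp
  ring

lemma hasSum_chi_even {n : ℕ} (hn : n ≠ 0) :
    HasSum (fun m : ℕ => (if m % 2 = 1 then (1:ℝ) else 0) / (m : ℝ) ^ (2 * n))
      ((-1 : ℝ) ^ (n+1) * ((2:ℝ) ^ (2*n) - 1) * Real.pi ^ (2 * n) * (bernoulli' (2 * n) : ℝ)
        / (2 * (2 * n).factorial)) := by
  have h1 := hasSum_zeta_nat hn
  set Zv := (-1:ℝ)^(n+1) * (2:ℝ)^(2*n-1) * Real.pi^(2*n) * (bernoulli (2*n) : ℝ)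
    / (2*n).factorial with hZ
  have h2 : HasSum (fun m : ℕ => (if m % 2 = 0 then (1:ℝ) else 0) / (m:ℝ)^(2*n)) (Zv / 4^n) := by
    have hinj : Function.Injective (fun m : ℕ => 2 * m) := fun a b h => by
      have h' : 2 * a = 2 * b := h
      omega
    have hvan : ∀ x, x ∉ Set.range (fun m : ℕ => 2 * m) →
        (if x % 2 = 0 then (1:ℝ) else 0) / (x:ℝ)^(2*n) = 0 := by
      intro x hx
      have hx1 : x % 2 = 1 := by
        by_contra hxc
        exact hx ⟨x/2, show 2*(x/2) = x by omega⟩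
      rw [if_neg (by omega), zero_div]
    rw [← Function.Injective.hasSum_iff hinj hvan]
    have heq : ((fun x : ℕ => (if x % 2 = 0 then (1:ℝ) else 0) / (x:ℝ)^(2*n)) ∘ (fun m : ℕ => 2 * m))
        = fun m : ℕ => (1 / (m:ℝ)^(2*n)) / 4^n := by
      funext m
      simp only [Function.comp_apply]
      rw [if_pos (by omega)]
      push_cast
      rw [mul_pow, show ((2:ℝ))^(2*n) = 4^n by rw [pow_mul]; norm_num]
      rcases eq_or_ne (m : ℝ) 0 with hm | hm
      · simp [hm, zero_pow (show 2*n ≠ 0 by omega)]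
      · field_simp
    rw [heq]
    exact h1.div_const _
  have h3 := h1.sub h2
  have hfe : (fun m : ℕ => 1/(m:ℝ)^(2*n) - (if m % 2 = 0 then (1:ℝ) else 0)/(m:ℝ)^(2*n))
      = fun m : ℕ => (if m % 2 = 1 then (1:ℝ) else 0) / (m:ℝ)^(2*n) := by
    funext m
    by_cases hm : m % 2 = 0
    · rw [if_pos hm, if_neg (show ¬ m % 2 = 1 by omega)]
      simp
    · rw [if_neg hm, if_pos (show m % 2 = 1 by omega), zero_div, sub_zero]
  rw [hfe] at h3
  convert h3 using 1
  · rfl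
  rw [hZ, ← bernoulli_eq_bernoulli'_of_ne_one (by omega : 2*n ≠ 1)]
  have h2n1 : (2:ℝ)^(2*n-1) = 2^(2*n)/2 := by
    rw [eq_div_iff (two_ne_zero)]
    rw [← pow_succ]
    congr 1
    omega
  have h4n : (4:ℝ)^n = 2^(2*n) := by
    rw [show (4:ℝ) = 2^2 by norm_num, ← pow_mul]
  have hf : ((2*n).factorial : ℝ) ≠ 0 := Nat.cast_ne_zero.2 (Nat.factorial_ne_zero _)
  have h2n0 : (2:ℝ)^(2*n) ≠ 0 := by positivity
  rw [h2n1, h4n]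
  field_simp

lemma I_pow_two_mul (t : ℕ) : Complex.I ^ (2 * t) = ((-1 : ℝ) ^ t : ℂ) := by
  rw [pow_mul, Complex.I_sq]
  push_cast
  ring

lemma qlim_odd_eq {κ i : ℕ} (hκ : κ % 2 = 1) (hi : i % 2 = 1) :
    qlim κ i = (((-1 : ℝ) ^ ((κ * i) / 2) * (eulerNumber (κ * i - 1) : ℝ) * Real.pi ^ (κ * i)
        / (2 ^ (κ * i + 1) * (κ * i - 1).factorial) : ℝ) : ℂ) := by
  have hs : (κ * i) % 2 = 1 := by rw [Nat.mul_mod, hκ, hi]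
  obtain ⟨t, ht⟩ : ∃ t, κ * i = 2 * t + 1 := ⟨κ*i/2, by omega⟩
  rw [qlim, if_pos hi, ht]
  have hdiv : (2*t+1)/2 = t := by omega
  rw [hdiv]
  have hI : Complex.I ^ (2*t+1) * (-Complex.I) = ((-1 : ℝ)^t : ℂ) := by
    rw [pow_succ, mul_assoc, I_pow_two_mul]
    rw [show Complex.I * -Complex.I = 1 by
      rw [mul_neg, Complex.I_mul_I, neg_neg]]
    rw [mul_one]
  rw [hI, show 2*t+1-1 = 2*t from rfl]
  push_cast
  ring

lemma qlim_even_eq {κ i n : ℕ} (hi : ¬ i % 2 = 1) (hn : κ * i = 2 * n) :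
    qlim κ i = (((-1 : ℝ) ^ (n+1) * ((2:ℝ) ^ (2*n) - 1) * Real.pi ^ (2 * n) * (bernoulli' (2 * n) : ℝ)
        / (2 * (2 * n).factorial) : ℝ) : ℂ) := by
  rw [qlim, if_neg hi, hn, I_pow_two_mul]
  push_cast
  ring

lemma leibniz_partial (M : ℕ) : ∑ m ∈ Finset.Icc 1 M, rfun m / (m : ℝ)
    = ∑ j ∈ Finset.range ((M+1)/2), (-1:ℝ)^j / (2*(j:ℝ)+1) := by
  induction M with
  | zero => simp
  | succ N ih =>
    rw [Finset.sum_Icc_succ_top (by omega : 1 ≤ N+1), ih]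
    rcases Nat.even_or_odd (N+1) with he | ho
    · obtain ⟨u, hu⟩ := he
      have h0 : rfun (N+1) = 0 := by rw [rfun, if_pos (by omega)]
      have hq : (N+1+1)/2 = (N+1)/2 := by omega
      rw [h0, hq, zero_div, add_zero]
    · obtain ⟨t, ht⟩ := ho
      have hq1 : (N+1+1)/2 = t+1 := by omega
      have hq2 : (N+1)/2 = t := by omega
      rw [hq1, hq2, Finset.sum_range_succ]
      congr 1
      rw [show N+1 = 2*t+1 by omega, rfun_leibniz]
      push_cast
      ring

lemma tendsto_half : Filter.Tendsto (fun M : ℕ => (M+1)/2) Filter.atTop Filter.atTop := by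
  apply Filter.tendsto_atTop_atTop.2
  intro b
  exact ⟨2*b, fun a ha => by omega⟩

lemma ps_tendsto {κ : ℕ} (hκ : κ % 2 = 1) {i : ℕ} (hi : 0 < i) :
    Filter.Tendsto (fun M => ps (fun m => chiFour m / (m : ℂ) ^ κ) M i)
      Filter.atTop (nhds (qlim κ i)) := by
  have hκ0 : 0 < κ := by omega
  have hterm : (fun M => ps (fun m => chiFour m / (m : ℂ) ^ κ) M i)
      = fun M => ((∑ m ∈ Finset.Icc 1 M, (rfun m)^i / (m:ℝ)^(κ*i) : ℝ) : ℂ) := by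
    funext M
    rw [ps, Complex.ofReal_sum]
    apply Finset.sum_congr rfl
    intro m _
    rw [div_pow, chiFour_nat, ← pow_mul]
    push_cast
    ring
  rw [hterm]
  by_cases h2 : i % 2 = 1
  · -- odd i
    have hs1 : (κ * i) % 2 = 1 := by rw [Nat.mul_mod, hκ, h2]
    rw [qlim_odd_eq hκ h2]
    have hfr : (fun M => ((∑ m ∈ Finset.Icc 1 M, (rfun m)^i / (m:ℝ)^(κ*i) : ℝ) : ℂ))
        = Complex.ofReal ∘ (fun M : ℕ => ∑ m ∈ Finset.Icc 1 M, rfun m / (m:ℝ)^(κ*i)) := by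
      funext M
      simp only [Function.comp_apply, rfun_odd_pow h2]
    rw [hfr]
    apply (Complex.continuous_ofReal.tendsto _).comp
    rcases Nat.lt_or_ge (κ * i) 3 with hlt | hge
    · -- κ * i = 1
      have h1 : κ * i = 1 := by
        have : 1 ≤ κ * i := Nat.one_le_iff_ne_zero.2 (by positivity)
        omega
      rw [h1]
      have hv : (-1:ℝ)^(1/2) * (eulerNumber (1-1) : ℝ) * Real.pi^1
          / (2^(1+1) * ((1-1).factorial : ℕ)) = Real.pi / 4 := by
        norm_num [MLVEuler.eulerNumber_zero]
      rw [hv]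
      have hfun : (fun M : ℕ => ∑ m ∈ Finset.Icc 1 M, rfun m / (m:ℝ)^1)
          = (fun k => ∑ j ∈ Finset.range k, (-1:ℝ)^j / (2*(j:ℝ)+1)) ∘ (fun M : ℕ => (M+1)/2) := by
        funext M
        simp only [Function.comp_apply, pow_one]
        exact leibniz_partial M
      rw [hfun]
      exact Real.tendsto_sum_pi_div_four.comp tendsto_half
    · -- κ * i ≥ 3
      obtain ⟨n, hn⟩ : ∃ n, κ * i = 2 * n + 1 := ⟨κ*i/2, by omega⟩
      have hn0 : n ≠ 0 := by omega
      have hh := hasSum_chi_odd hn0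
      have := tendsto_Icc_of_hasSum hh (by rw [rfun_zero, zero_div])
      rw [hn]
      convert this using 2
      all_goals (rw [show (2*n+1)/2 = n by omega]; push_cast; ring)
  · -- even i
    have hi0 : i ≠ 0 := by omega
    obtain ⟨n, hn⟩ : ∃ n, κ * i = 2 * n := ⟨κ*i/2, by
      have : (κ * i) % 2 = 0 := by
        rw [Nat.mul_mod, hκ]
        omega
      omega⟩
    have hn0 : n ≠ 0 := by
      have : 1 ≤ κ * i := Nat.one_le_iff_ne_zero.2 (by positivity)
      omega
    rw [qlim_even_eq h2 hn]
    have hfr : (fun M => ((∑ m ∈ Finset.Icc 1 M, (rfun m)^i / (m:ℝ)^(κ*i) : ℝ) : ℂ))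
        = Complex.ofReal ∘ (fun M : ℕ => ∑ m ∈ Finset.Icc 1 M,
            (if m % 2 = 1 then (1:ℝ) else 0) / (m:ℝ)^(2*n)) := by
      funext M
      simp only [Function.comp_apply, hn]
      congr 1
      apply Finset.sum_congr rfl
      intro m _
      rw [rfun_even_pow (by omega) hi0]
    rw [hfr]
    apply (Complex.continuous_ofReal.tendsto _).comp
    exact tendsto_Icc_of_hasSum (hasSum_chi_even hn0) (by rw [if_neg (by omega), zero_div])

/-! ### assembling -/

lemma tendsto_multiset_prod (s : Multiset ℕ) (qM : ℕ → ℕ → ℂ) (ql : ℕ → ℂ)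
    (h : ∀ i ∈ s, Filter.Tendsto (fun M => qM M i) Filter.atTop (nhds (ql i))) :
    Filter.Tendsto (fun M => ((s.map (qM M)).prod)) Filter.atTop (nhds ((s.map ql).prod)) := by
  induction s using Multiset.induction_on with
  | empty => simpa using tendsto_const_nhds
  | cons a t ih =>
    simp only [Multiset.map_cons, Multiset.prod_cons]
    exact (h a (Multiset.mem_cons_self a t)).mul (ih fun i hi => h i (Multiset.mem_cons_of_mem hi))

lemma PS_tendsto (qM : ℕ → ℕ → ℂ) (ql : ℕ → ℂ)
    (h : ∀ i, 0 < i → Filter.Tendsto (fun M => qM M i) Filter.atTop (nhds (ql i))) (d : ℕ) :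
    Filter.Tendsto (fun M => PS (qM M) d) Filter.atTop (nhds (PS ql d)) := by
  unfold PS
  apply tendsto_finset_sum
  intro s hs
  obtain ⟨_, hpos⟩ := mem_Pfin.1 hs
  unfold w
  exact Filter.Tendsto.div_const
    (tendsto_multiset_prod s qM ql (fun i hi => h i (hpos i hi))) _

lemma PS_eq_partition_sum (q : ℕ → ℂ) (d : ℕ) :
    PS q d = ∑ μ : Nat.Partition d, (μ.parts.map q).prod / (zPart μ : ℂ) := by
  rw [PS, Pfin]
  rw [Finset.sum_image (fun μ _ ν _ h => Nat.Partition.ext h)]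
  rfl

lemma prod_qlim {κ : ℕ} (hκ : κ % 2 = 1) (s : Multiset ℕ) (hpos : ∀ a ∈ s, 0 < a) :
    (s.map (qlim κ)).prod =
      Complex.I ^ (κ * s.sum) * (Real.pi : ℂ) ^ (κ * s.sum) *
      ((-1:ℂ) ^ (Multiset.card s) *
        Complex.I ^ (Multiset.card (s.filter (fun p => p % 2 = 1))) *
        ((s.filter (fun p => p % 2 = 0)).map (fun pj => ((2:ℂ) ^ (κ*pj) - 1))).prod /
        2 ^ (Multiset.card s + κ * (s.filter (fun p => p % 2 = 1)).sum)) *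
      ((s.filter (fun p => p % 2 = 1)).map
        (fun pj => (eulerNumber (κ*pj-1) : ℂ) / ((κ*pj-1).factorial : ℂ))).prod *
      ((s.filter (fun p => p % 2 = 0)).map
        (fun pj => (bernoulli' (κ*pj) : ℂ) / ((κ*pj).factorial : ℂ))).prod := by
  induction s using Multiset.induction_on with
  | empty => simp
  | cons a s ih =>
    have ha : 0 < a := hpos a (Multiset.mem_cons_self a s)
    have ih' := ih (fun b hb => hpos b (Multiset.mem_cons_of_mem hb))
    rw [Multiset.map_cons, Multiset.prod_cons, ih']
    by_cases h2 : a % 2 = 1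
    · rw [show Multiset.filter (fun p => p % 2 = 1) (a ::ₘ s)
            = a ::ₘ Multiset.filter (fun p => p % 2 = 1) s from Multiset.filter_cons_of_pos _ h2,
        show Multiset.filter (fun p => p % 2 = 0) (a ::ₘ s)
            = Multiset.filter (fun p => p % 2 = 0) s from Multiset.filter_cons_of_neg _ (by omega)]
      rw [Multiset.card_cons, Multiset.sum_cons, Multiset.card_cons, Multiset.sum_cons,
        Multiset.map_cons, Multiset.prod_cons]
      rw [qlim, if_pos h2]
      rw [show κ * (a + s.sum) = κ*a + κ*s.sum by ring, pow_add, pow_add]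
      rw [show Multiset.card s + 1 + κ * (a + (Multiset.filter (fun p => p % 2 = 1) s).sum)
          = (κ*a+1) + (Multiset.card s + κ * (Multiset.filter (fun p => p % 2 = 1) s).sum) by ring]
      rw [pow_add, pow_succ, pow_succ]
      ring
    · rw [show Multiset.filter (fun p => p % 2 = 1) (a ::ₘ s)
            = Multiset.filter (fun p => p % 2 = 1) s from Multiset.filter_cons_of_neg _ h2,
        show Multiset.filter (fun p => p % 2 = 0) (a ::ₘ s)
            = a ::ₘ Multiset.filter (fun p => p % 2 = 0) s from Multiset.filter_cons_of_pos _ (by omega)]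
      rw [Multiset.card_cons, Multiset.sum_cons,
        Multiset.map_cons, Multiset.prod_cons, Multiset.map_cons, Multiset.prod_cons]
      rw [qlim, if_neg h2]
      rw [show κ * (a + s.sum) = κ*a + κ*s.sum by ring, pow_add, pow_add]
      rw [show Multiset.card s + 1 + κ * (Multiset.filter (fun p => p % 2 = 1) s).sum
          = 1 + (Multiset.card s + κ * (Multiset.filter (fun p => p % 2 = 1) s).sum) by ring]
      rw [pow_add, pow_succ]
      ring

lemma prod_sign (c : ℕ → ℂ) (s : Multiset ℕ) :
    (s.map (fun i => (-1:ℂ)^(i+1) * c i)).prod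
      = (-1:ℂ)^(s.sum + Multiset.card s) * (s.map c).prod := by
  induction s using Multiset.induction_on with
  | empty => simp
  | cons a s ih =>
    rw [Multiset.map_cons, Multiset.prod_cons, ih, Multiset.map_cons, Multiset.prod_cons,
      Multiset.card_cons, Multiset.sum_cons]
    rw [show a + s.sum + (Multiset.card s + 1) = (a+1) + (s.sum + Multiset.card s) by ring,
      pow_add]
    ring

lemma neg_one_zpow_eq (d ℓ : ℕ) : (-1:ℂ)^((d:ℤ) - ℓ) = (-1:ℂ)^(d + ℓ) := by
  have h : (d:ℤ) - ℓ = ((d + ℓ : ℕ) : ℤ) - ((2*ℓ : ℕ) : ℤ) := by push_cast; ring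
  rw [h, zpow_sub₀ (by norm_num : (-1:ℂ) ≠ 0), zpow_natCast, zpow_natCast]
  rw [pow_mul, neg_one_sq, one_pow, div_one]

lemma PS_qlim_eq_weak {κ : ℕ} (hκ : κ % 2 = 1) (d : ℕ) :
    PS (qlim κ) d =
      Complex.I ^ (κ * d) * chiFourEvalSum κ d false * (Real.pi : ℂ) ^ (κ * d) := by
  rw [PS_eq_partition_sum, chiFourEvalSum, Finset.mul_sum, Finset.sum_mul]
  apply Finset.sum_congr rfl
  intro μ _
  rw [prod_qlim hκ μ.parts (fun a ha => μ.parts_pos ha), μ.parts_sum]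
  simp only [Bool.false_eq_true, if_false]
  ring

lemma PS_qlim_eq_strict {κ : ℕ} (hκ : κ % 2 = 1) (d : ℕ) :
    PS (fun i => (-1 : ℂ) ^ (i+1) * qlim κ i) d =
      Complex.I ^ (κ * d) * chiFourEvalSum κ d true * (Real.pi : ℂ) ^ (κ * d) := by
  rw [PS_eq_partition_sum, chiFourEvalSum, Finset.mul_sum, Finset.sum_mul]
  apply Finset.sum_congr rfl
  intro μ _
  rw [prod_sign (qlim κ) μ.parts, prod_qlim hκ μ.parts (fun a ha => μ.parts_pos ha), μ.parts_sum]
  simp only [if_true]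
  rw [neg_one_zpow_eq d μ.parts.card]
  ring

end MLV

end MLVAux

/-- **Formula (2.9)**: for the primitive Dirichlet character `χ_{-4}` mod 4 and
`κ = 2k + 1 ≥ 1` (`k ≥ 0`), `d ≥ 1`,
`L^ω_d({κ}^d; {χ_{-4}}^d) = (-1)^{κd/2}
  [Σ_{μ ⊢ d} (ε^ω_μ/z_μ) ((-1)^{ℓ(μ) + ℓ(μ_o)/2} ∏_{μ_j even}(2^{κμ_j}-1) / 2^{ℓ(μ)+κ|μ_o|})
    ∏_{μ_j odd} E_{κμ_j-1}/(κμ_j-1)! ∏_{μ_j even} B_{κμ_j}/(κμ_j)!] π^{κd}`,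
with the half-integer signs written via `I = √-1`; the multiple `L`-value is
expressed as the limit of its truncations. -/
theorem multiple_L_value_chi_four
    (k d : ℕ) (hd : 1 ≤ d) (κ : ℕ) (hκ : κ = 2 * k + 1) :
    Tendsto (multLSumLt chiFour d κ) atTop
      (𝓝 (Complex.I ^ (κ * d) * chiFourEvalSum κ d true * (Real.pi : ℂ) ^ (κ * d))) ∧
    Tendsto (multLSumLe chiFour d κ) atTop
      (𝓝 (Complex.I ^ (κ * d) * chiFourEvalSum κ d false * (Real.pi : ℂ) ^ (κ * d))) := by
  have hκ1 : κ % 2 = 1 := by omega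
  constructor
  · have he : multLSumLt chiFour d κ = fun M => MLV.PS (fun i => (-1:ℂ)^(i+1) * MLV.ps (fun m => chiFour m / (m:ℂ)^κ) M i) d := by
      funext M; rw [MLV.multLSumLt_eq, MLV.Es_eq_PS]
    rw [he, ← MLV.PS_qlim_eq_strict hκ1 d]
    have := MLV.PS_tendsto (fun M i => (-1:ℂ)^(i+1) * MLV.ps (fun m => chiFour m / (m:ℂ)^κ) M i)
      (fun i => (-1:ℂ)^(i+1) * MLV.qlim κ i) (fun i hi => (MLV.ps_tendsto hκ1 hi).const_mul _) d
    exact this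
  · have he : multLSumLe chiFour d κ = fun M => MLV.PS (fun i => MLV.ps (fun m => chiFour m / (m:ℂ)^κ) M i) d := by
      funext M; rw [MLV.multLSumLe_eq, MLV.Hs_eq_PS]
    rw [he, ← MLV.PS_qlim_eq_weak hκ1 d]
    exact MLV.PS_tendsto _ (MLV.qlim κ) (fun i hi => MLV.ps_tendsto hκ1 hi) d

end
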